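/- The saddle tube has small mass: for every ε ∈ (0, 1/8) and all distinct x, y ∈ S⋆, there exists a constant C > 0 such that μ_N(J^{x,y}) ≤ C · N^{−(α−1)} for all N with Nε > π_N. -/

import Mathlib

open Filter Topology Finset
open scoped Classical

noncomputable section

/-- `a(n)`: `a(0)=1`, `a(n)=n^α` for `n ≥ 1`. -/
def aZR (α : ℝ) (n : ℕ) : ℝ := if n = 0 then 1 else (n : ℝ) ^ α

/-- The set of configurations of `N` particles on `S`. -/
def configs (S : Type*) [Fintype S] (N : ℕ) : Finset (S → ℕ) :=
  (Fintype.piFinset fun _ : S => Finset.range (N + 1)).filter fun η => ∑ x, η x = N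

/-- `π_N = ⌊N^{1/α+1/2}⌋`. -/
def piZR (α : ℝ) (N : ℕ) : ℕ := ⌊(N : ℝ) ^ (1 / α + 1 / 2)⌋₊

/-- The enlarged valley `D^x = {η : η_x ≥ N(1-2ε)}`. -/
def Dwell (S : Type*) [Fintype S] (ε : ℝ) (N : ℕ) (x : S) : Finset (S → ℕ) :=
  (configs S N).filter fun η => (N : ℝ) * (1 - 2 * ε) ≤ (η x : ℝ)

/-- The tube `T^{x,y} = {η : η_x + η_y ≥ N - π_N}`. -/
def Ttube (S : Type*) [Fintype S] (α : ℝ) (N : ℕ) (x y : S) : Finset (S → ℕ) :=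
  (configs S N).filter fun η => N ≤ η x + η y + piZR α N

/-- The saddle tube `J^{x,y} = T^{x,y} ∖ (D^x ∪ D^y)`. -/
def Jtube (S : Type*) [Fintype S] (α ε : ℝ) (N : ℕ) (x y : S) : Finset (S → ℕ) :=
  Ttube S α N x y \ (Dwell S ε N x ∪ Dwell S ε N y)

/-- The good region `G`. -/
def Gset (S : Type*) [Fintype S] (α ε : ℝ) (Sstar : Finset S) (N : ℕ) :
    Finset (S → ℕ) :=
  Sstar.biUnion (fun x => Dwell S ε N x) ∪
    Sstar.biUnion (fun x => (Sstar.erase x).biUnion fun y => Jtube S α ε N x y)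

/-- Inner boundary of the saddle tube. -/
def bdInJ (S : Type*) [Fintype S] (α ε : ℝ) (N : ℕ) (x y : S) : Finset (S → ℕ) :=
  (Jtube S α ε N x y).filter fun η => η x + η y + piZR α N = N

/-- Outer boundary of the saddle tube. -/
def bdOutJ (S : Type*) [Fintype S] (α ε : ℝ) (Sstar : Finset S) (N : ℕ) (x y : S) :
    Finset (S → ℕ) :=
  ((configs S N) \ Gset S α ε Sstar N).filter fun η => η x + η y + piZR α N + 1 = N

/-- Inner boundary of the enlarged valley. -/
def bdInD (S : Type*) [Fintype S] (α ε : ℝ) (Sstar : Finset S) (N : ℕ) (x : S) :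
    Finset (S → ℕ) :=
  ((Dwell S ε N x).filter fun η => η x = ⌈(N : ℝ) * (1 - 2 * ε)⌉₊) \
    (Sstar.erase x).biUnion (fun y => Ttube S α N x y)

/-- Outer boundary of the enlarged valley. -/
def bdOutD (S : Type*) [Fintype S] (α ε : ℝ) (Sstar : Finset S) (N : ℕ) (x : S) :
    Finset (S → ℕ) :=
  (((configs S N) \ Gset S α ε Sstar N).filter
      fun η => η x + 1 = ⌈(N : ℝ) * (1 - 2 * ε)⌉₊) \
    (Sstar.erase x).biUnion (fun y => Ttube S α N x y)

/-- Inner boundary of `G`. -/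
def bdInG (S : Type*) [Fintype S] (α ε : ℝ) (Sstar : Finset S) (N : ℕ) :
    Finset (S → ℕ) :=
  Sstar.biUnion (fun x => bdInD S α ε Sstar N x) ∪
    Sstar.biUnion (fun x => (Sstar.erase x).biUnion fun y => bdInJ S α ε N x y)

/-- Outer boundary of `G`. -/
def bdOutG (S : Type*) [Fintype S] (α ε : ℝ) (Sstar : Finset S) (N : ℕ) :
    Finset (S → ℕ) :=
  Sstar.biUnion (fun x => bdOutD S α ε Sstar N x) ∪
    Sstar.biUnion (fun x => (Sstar.erase x).biUnion fun y => bdOutJ S α ε Sstar N x y)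

end

lemma aZR_pos {α : ℝ} (n : ℕ) : 0 < aZR α n := by
  unfold aZR; split
  · norm_num
  · next h => exact Real.rpow_pos_of_pos (by exact_mod_cast Nat.pos_of_ne_zero h) α

lemma one_le_aZR {α : ℝ} (hα : 0 ≤ α) (n : ℕ) : 1 ≤ aZR α n := by
  unfold aZR; split
  · exact le_refl 1
  · next h =>
      calc (1:ℝ) = 1 ^ α := (Real.one_rpow α).symm
        _ ≤ (n:ℝ) ^ α := by
          apply Real.rpow_le_rpow (by norm_num) ?_ hα
          exact_mod_cast Nat.one_le_iff_ne_zero.mpr h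

lemma sum_inv_sq (N : ℕ) : ∑ n ∈ range N, (((n:ℝ)+1)^2)⁻¹ ≤ 2 - 2*((N:ℝ)+1)⁻¹ := by
  induction N with
  | zero => norm_num
  | succ n ih =>
    rw [sum_range_succ]
    have hn : (0:ℝ) ≤ n := Nat.cast_nonneg n
    have h1 : (((n:ℝ)+1)^2)⁻¹ ≤ 2*((n:ℝ)+1)⁻¹ - 2*((n:ℝ)+2)⁻¹ := by
      have he : 2*((n:ℝ)+1)⁻¹ - 2*((n:ℝ)+2)⁻¹ = 2*(((n:ℝ)+1)*((n:ℝ)+2))⁻¹ := by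
        field_simp; ring
      rw [he, inv_eq_one_div, show (2:ℝ)*(((n:ℝ)+1)*((n:ℝ)+2))⁻¹ = 2/(((n:ℝ)+1)*((n:ℝ)+2)) by ring]
      rw [div_le_div_iff₀ (by positivity) (by positivity)]
      nlinarith
    have hc : ((n:ℝ)+1+1)⁻¹ = ((n:ℝ)+2)⁻¹ := by norm_num; ring_nf
    push_cast
    rw [hc]
    linarith

lemma sum_inv_aZR {α : ℝ} (hα : 2 ≤ α) (N : ℕ) :
    ∑ n ∈ range (N+1), (aZR α n)⁻¹ ≤ 3 := by
  rw [Finset.sum_range_succ']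
  have h0 : aZR α 0 = 1 := by unfold aZR; simp
  have hle : ∀ n : ℕ, (aZR α (n+1))⁻¹ ≤ (((n:ℝ)+1)^2)⁻¹ := by
    intro n
    have hn : (0:ℝ) ≤ n := Nat.cast_nonneg n
    have hb : (1:ℝ) ≤ (n:ℝ)+1 := by linarith
    have : ((n:ℝ)+1)^2 ≤ aZR α (n+1) := by
      unfold aZR
      rw [if_neg (Nat.succ_ne_zero n)]
      push_cast
      calc ((n:ℝ)+1)^2 = ((n:ℝ)+1) ^ (2:ℝ) := by rw [Real.rpow_two]
        _ ≤ ((n:ℝ)+1) ^ α := Real.rpow_le_rpow_of_exponent_le hb hα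
    exact inv_anti₀ (by positivity) this
  have hN : (0:ℝ) ≤ ((N:ℝ)+1)⁻¹ := by positivity
  have hs := sum_inv_sq N
  have : ∑ n ∈ range N, (aZR α (n+1))⁻¹ ≤ ∑ n ∈ range N, (((n:ℝ)+1)^2)⁻¹ :=
    Finset.sum_le_sum fun n _ => hle n
  rw [h0]
  norm_num
  linarith

theorem stmt_14 {S : Type*} [Fintype S] (α : ℝ) (hα : 2 < α)
    (m : S → ℝ) (hm : ∀ x, 0 < m x)
    (Mstar : ℝ) (hMstar : IsGreatest (Set.range m) Mstar)
    (Sstar : Finset S) (hSstar : Sstar = Finset.univ.filter fun x => m x = Mstar)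
    (hκ : 2 ≤ Sstar.card)
    (mstar : S → ℝ) (hmstar : ∀ x, mstar x = m x / Mstar)
    (Z : ℕ → ℝ)
    (hZ : ∀ N, Z N = (N : ℝ) ^ α *
      ∑ η ∈ configs S N, (∏ x, mstar x ^ η x) / ∏ x, aZR α (η x))
    (μ : ℕ → (S → ℕ) → ℝ)
    (hμ : ∀ N η, μ N η =
      (N : ℝ) ^ α * (∏ x, mstar x ^ η x) / (Z N * ∏ x, aZR α (η x)))
    (ε : ℝ) (hε : 0 < ε) (hε' : ε < 1 / 8)
    (x y : S) (hx : x ∈ Sstar) (hy : y ∈ Sstar) (hxy : x ≠ y) :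
    ∃ C : ℝ, 0 < C ∧ ∀ N : ℕ, (piZR α N : ℝ) < ε * N →
      ∑ η ∈ Jtube S α ε N x y, μ N η ≤ C * (N : ℝ) ^ (-(α - 1)) := by
  classical
  have hα0 : (0:ℝ) < α := by linarith
  obtain ⟨⟨x0, hx0⟩, hMub⟩ := hMstar
  have hM : 0 < Mstar := hx0 ▸ hm x0
  have hmsle : ∀ z, mstar z ≤ 1 := fun z => by
    rw [hmstar, div_le_one hM]; exact hMub ⟨z, rfl⟩
  have hmspos : ∀ z, 0 < mstar z := fun z => by
    rw [hmstar]; exact div_pos (hm z) hM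
  have hmsx : mstar x = 1 := by
    rw [hmstar]
    have : m x = Mstar := by
      rw [hSstar] at hx; exact (Finset.mem_filter.mp hx).2
    rw [this, div_self hM.ne']
  refine ⟨2 * 3 ^ (Fintype.card S) * ε ^ (-(2*α)), by positivity, ?_⟩
  intro N hN
  have hNpos : 0 < N := by
    by_contra h
    push_neg at h
    interval_cases N
    · have h0 : (0:ℝ) ≤ (piZR α 0 : ℝ) := Nat.cast_nonneg _
      simp at hN
      linarith
  have hNR : (0:ℝ) < N := by exact_mod_cast hNpos
  have hεN : (0:ℝ) < ε * N := by positivity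
  -- Z N ≥ 1
  have hZ1 : 1 ≤ Z N := by
    set η0 : S → ℕ := fun z => if z = x then N else 0 with hη0
    have hmem : η0 ∈ configs S N := by
      unfold configs
      refine Finset.mem_filter.mpr ⟨?_, ?_⟩
      · refine Fintype.mem_piFinset.mpr fun z => ?_
        rw [Finset.mem_range, hη0]
        dsimp only
        split <;> omega
      · simp [hη0]
    have h1 : ∏ z, mstar z ^ η0 z = 1 := by
      rw [Finset.prod_eq_single x]
      · rw [hη0]; dsimp only; rw [if_pos rfl, hmsx, one_pow]
      · intro b _ hb; rw [hη0]; dsimp only; rw [if_neg hb, pow_zero]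
      · intro h; exact absurd (Finset.mem_univ x) h
    have h2 : ∏ z, aZR α (η0 z) = (N:ℝ) ^ α := by
      rw [Finset.prod_eq_single x]
      · rw [hη0]; dsimp only; rw [if_pos rfl]
        unfold aZR; rw [if_neg hNpos.ne']
      · intro b _ hb; rw [hη0]; dsimp only; rw [if_neg hb]
        unfold aZR; simp
      · intro h; exact absurd (Finset.mem_univ x) h
    have hsingle : ((N:ℝ)^α)⁻¹ ≤
        ∑ η ∈ configs S N, (∏ z, mstar z ^ η z) / ∏ z, aZR α (η z) := by
      have := Finset.single_le_sum (f := fun η : S → ℕ =>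
          (∏ z, mstar z ^ η z) / ∏ z, aZR α (η z))
        (fun η _ => div_nonneg
          (Finset.prod_nonneg fun z _ => pow_nonneg (hmspos z).le _)
          (Finset.prod_nonneg fun z _ => (aZR_pos _).le)) hmem
      rw [h1, h2, one_div] at this
      exact this
    rw [hZ N]
    calc (1:ℝ) = (N:ℝ)^α * ((N:ℝ)^α)⁻¹ := by
          rw [mul_inv_cancel₀ (by positivity)]
      _ ≤ _ := by
          apply mul_le_mul_of_nonneg_left hsingle (by positivity)
  set Tset : Finset S := Finset.univ \ {x, y} with hTset
  have hxT : x ∉ Tset := by rw [hTset]; simp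
  have hsubT : Tset ⊆ Finset.univ.erase y := by
    intro z hz
    rw [hTset, Finset.mem_sdiff, Finset.mem_insert, Finset.mem_singleton] at hz
    exact Finset.mem_erase.mpr ⟨fun h => hz.2 (Or.inr h), Finset.mem_univ z⟩
  set h : S → ℕ → ℝ := fun z n =>
    if z = y then (if n = 0 then 1 else 0) else if z ∈ Tset then (aZR α n)⁻¹ else 1 with hh
  set g : (S → ℕ) → ℝ := fun ξ => ∏ z, h z (ξ z) with hg
  set φ : (S → ℕ) → (S → ℕ) := fun η => Function.update η y 0 with hφ
  have hhnonneg : ∀ z n, 0 ≤ h z n := by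
    intro z n
    rw [hh]; dsimp only
    split
    · split <;> norm_num
    · split
      · exact (inv_pos.mpr (aZR_pos _)).le
      · norm_num
  have hgnonneg : ∀ ξ, 0 ≤ g ξ := fun ξ => Finset.prod_nonneg fun z _ => hhnonneg z (ξ z)
  have hJfacts : ∀ η ∈ Jtube S α ε N x y,
      η ∈ configs S N ∧ ε * N ≤ (η x : ℝ) ∧ ε * N ≤ (η y : ℝ) := by
    intro η hη
    rw [Jtube, Finset.mem_sdiff, Finset.mem_union] at hη
    obtain ⟨hT, hD⟩ := hη
    push_neg at hD
    obtain ⟨hDx, hDy⟩ := hD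
    rw [Ttube, Finset.mem_filter] at hT
    obtain ⟨hcfg, htube⟩ := hT
    have hdx : (η x : ℝ) < (N:ℝ) * (1 - 2*ε) := by
      by_contra hc
      push_neg at hc
      exact hDx (Finset.mem_filter.mpr ⟨hcfg, hc⟩)
    have hdy : (η y : ℝ) < (N:ℝ) * (1 - 2*ε) := by
      by_contra hc
      push_neg at hc
      exact hDy (Finset.mem_filter.mpr ⟨hcfg, hc⟩)
    have htubeR : (N:ℝ) ≤ (η x : ℝ) + (η y : ℝ) + (piZR α N : ℝ) := by
      exact_mod_cast htube
    have hring : (N:ℝ) * (1 - 2*ε) = (N:ℝ) - 2*(ε*(N:ℝ)) := by ring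
    rw [hring] at hdx hdy
    exact ⟨hcfg, by linarith, by linarith⟩
  have hpoint : ∀ η ∈ Jtube S α ε N x y,
      μ N η ≤ (N:ℝ)^α * (ε*(N:ℝ))^(-(2*α)) * g (φ η) := by
    intro η hη
    obtain ⟨hcfg, hεx, hεy⟩ := hJfacts η hη
    have hgφ : g (φ η) = ∏ z ∈ Tset, (aZR α (η z))⁻¹ := by
      rw [hg, hφ]
      dsimp only
      rw [← Finset.mul_prod_erase _ _ (Finset.mem_univ y), Function.update_self]
      have hy0 : h y 0 = 1 := by rw [hh]; simp
      rw [hy0, one_mul]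
      rw [Finset.prod_congr rfl (fun z hz => by
        rw [Function.update_of_ne (Finset.ne_of_mem_erase hz)])]
      rw [Finset.prod_congr rfl (fun z hz => by
        rw [hh]; dsimp only
        rw [if_neg (Finset.ne_of_mem_erase hz)] : ∀ z ∈ Finset.univ.erase y,
          h z (η z) = if z ∈ Tset then (aZR α (η z))⁻¹ else 1)]
      rw [Finset.prod_ite_mem, Finset.inter_eq_right.mpr hsubT]
    have hηx0 : η x ≠ 0 := by
      intro h0
      rw [h0] at hεx
      simp at hεx
      linarith
    have hηy0 : η y ≠ 0 := by
      intro h0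
      rw [h0] at hεy
      simp at hεy
      linarith
    have hax : (ε*(N:ℝ))^α ≤ aZR α (η x) := by
      unfold aZR
      rw [if_neg hηx0]
      exact Real.rpow_le_rpow hεN.le hεx hα0.le
    have hay : (ε*(N:ℝ))^α ≤ aZR α (η y) := by
      unfold aZR
      rw [if_neg hηy0]
      exact Real.rpow_le_rpow hεN.le hεy hα0.le
    have haxy : (ε*(N:ℝ))^(2*α) ≤ aZR α (η x) * aZR α (η y) := by
      rw [two_mul, Real.rpow_add hεN]
      exact mul_le_mul hax hay (by positivity) (aZR_pos _).le
    have hA : (∏ z, aZR α (η z)) = (∏ z ∈ Tset, aZR α (η z)) * (aZR α (η x) * aZR α (η y)) := by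
      have h1 := Finset.prod_sdiff (f := fun z => aZR α (η z))
        (Finset.subset_univ ({x,y} : Finset S))
      rw [Finset.prod_pair hxy] at h1
      rw [hTset]
      exact h1.symm
    have hTpos : (0:ℝ) < ∏ z ∈ Tset, aZR α (η z) := Finset.prod_pos fun z _ => aZR_pos _
    have hApos : (0:ℝ) < ∏ z, aZR α (η z) := Finset.prod_pos fun z _ => aZR_pos _
    have hkey : (∏ z, aZR α (η z))⁻¹ ≤ (ε*(N:ℝ))^(-(2*α)) * ∏ z ∈ Tset, (aZR α (η z))⁻¹ := by
      rw [Finset.prod_inv_distrib, Real.rpow_neg hεN.le, ← mul_inv, hA]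
      apply inv_anti₀ (by positivity)
      rw [mul_comm ((ε*(N:ℝ))^(2*α))]
      exact mul_le_mul_of_nonneg_left haxy hTpos.le
    have hP : ∏ z, mstar z ^ η z ≤ 1 :=
      Finset.prod_le_one (fun z _ => pow_nonneg (hmspos z).le _)
        (fun z _ => pow_le_one₀ (hmspos z).le (hmsle z))
    have hNα : (0:ℝ) < (N:ℝ)^α := Real.rpow_pos_of_pos hNR α
    rw [hμ]
    calc (N:ℝ)^α * (∏ z, mstar z ^ η z) / (Z N * ∏ z, aZR α (η z))
        ≤ (N:ℝ)^α / (∏ z, aZR α (η z)) := by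
          apply div_le_div₀ hNα.le ?_ hApos ?_
          · exact mul_le_of_le_one_right hNα.le hP
          · exact le_mul_of_one_le_left hApos.le hZ1
      _ = (N:ℝ)^α * (∏ z, aZR α (η z))⁻¹ := by rw [div_eq_mul_inv]
      _ ≤ (N:ℝ)^α * ((ε*(N:ℝ))^(-(2*α)) * ∏ z ∈ Tset, (aZR α (η z))⁻¹) :=
          mul_le_mul_of_nonneg_left hkey hNα.le
      _ = (N:ℝ)^α * (ε*(N:ℝ))^(-(2*α)) * g (φ η) := by rw [hgφ]; ring
  have hcfgJ : ∀ η ∈ Jtube S α ε N x y, η ∈ configs S N := fun η hη => (hJfacts η hη).1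
  have hsumN : ∀ η ∈ Jtube S α ε N x y, ∑ z, η z = N := by
    intro η hη
    have hc := hcfgJ η hη
    unfold configs at hc
    exact (Finset.mem_filter.mp hc).2
  have hinj : ∀ η1 ∈ Jtube S α ε N x y, ∀ η2 ∈ Jtube S α ε N x y, φ η1 = φ η2 → η1 = η2 := by
    intro η1 h1 η2 h2 h12
    have hz : ∀ z, z ≠ y → η1 z = η2 z := by
      intro z hzy
      have hc := congrFun h12 z
      rw [hφ] at hc
      dsimp only at hc
      rwa [Function.update_of_ne hzy, Function.update_of_ne hzy] at hc
    have hs1 := hsumN η1 h1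
    have hs2 := hsumN η2 h2
    funext z
    by_cases hzy : z = y
    · rw [hzy]
      have e1 : ∑ w ∈ Finset.univ.erase y, η1 w = ∑ w ∈ Finset.univ.erase y, η2 w :=
        Finset.sum_congr rfl fun w hw => hz w (Finset.ne_of_mem_erase hw)
      have t1 : ∑ w ∈ Finset.univ.erase y, η1 w + η1 y = N := by
        rw [Finset.sum_erase_add _ _ (Finset.mem_univ y)]; exact hs1
      have t2 : ∑ w ∈ Finset.univ.erase y, η2 w + η2 y = N := by
        rw [Finset.sum_erase_add _ _ (Finset.mem_univ y)]; exact hs2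
      omega
    · exact hz z hzy
  have hsum2 : ∑ η ∈ Jtube S α ε N x y, g (φ η) ≤ ((N:ℝ)+1) * 3 ^ (Fintype.card S) := by
    calc ∑ η ∈ Jtube S α ε N x y, g (φ η)
        = ∑ ξ ∈ (Jtube S α ε N x y).image φ, g ξ := (Finset.sum_image hinj).symm
      _ ≤ ∑ ξ ∈ Fintype.piFinset (fun _ : S => Finset.range (N+1)), g ξ := by
          apply Finset.sum_le_sum_of_subset_of_nonneg
          · intro ξ hξ
            obtain ⟨η, hη, rfl⟩ := Finset.mem_image.mp hξ
            have hc := hcfgJ η hη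
            unfold configs at hc
            have hpi := (Finset.mem_filter.mp hc).1
            refine Fintype.mem_piFinset.mpr fun z => ?_
            rw [hφ]
            dsimp only
            by_cases hzy : z = y
            · subst hzy
              rw [Function.update_self]
              exact Finset.mem_range.mpr (Nat.succ_pos N)
            · rw [Function.update_of_ne hzy]
              exact Fintype.mem_piFinset.mp hpi z
          · intro ξ _ _
            exact hgnonneg ξ
      _ = ∏ z, ∑ n ∈ Finset.range (N+1), h z n := by
          rw [hg]
          exact (Finset.prod_univ_sum _ _).symm
      _ ≤ ∏ z, (if z = x then ((N:ℝ)+1) else 3) := by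
          apply Finset.prod_le_prod
          · intro z _
            exact Finset.sum_nonneg fun n _ => hhnonneg z n
          · intro z _
            by_cases hzx : z = x
            · rw [if_pos hzx]
              have hzy : z ≠ y := by rw [hzx]; exact hxy
              have hzT : z ∉ Tset := by rw [hzx]; exact hxT
              have hx1 : ∀ n ∈ Finset.range (N+1), h z n = 1 := by
                intro n _
                rw [hh]
                dsimp only
                rw [if_neg hzy, if_neg hzT]
              rw [Finset.sum_congr rfl hx1, Finset.sum_const, Finset.card_range]
              push_cast
              simp
            · rw [if_neg hzx]
              by_cases hzy : z = y
              · have hy1 : ∀ n ∈ Finset.range (N+1), h z n = if n = 0 then (1:ℝ) else 0 := by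
                  intro n _
                  rw [hh]
                  dsimp only
                  rw [if_pos hzy]
                rw [Finset.sum_congr rfl hy1]
                rw [Finset.sum_ite_eq' (Finset.range (N+1)) 0 (fun _ => (1:ℝ))]
                rw [if_pos (Finset.mem_range.mpr (Nat.succ_pos N))]
                norm_num
              · have hzT : z ∈ Tset := by
                  rw [hTset]
                  simp [hzx, hzy]
                have hz1 : ∀ n ∈ Finset.range (N+1), h z n = (aZR α n)⁻¹ := by
                  intro n _
                  rw [hh]
                  dsimp only
                  rw [if_neg hzy, if_pos hzT]
                rw [Finset.sum_congr rfl hz1]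
                exact sum_inv_aZR (le_of_lt hα) N
      _ = ((N:ℝ)+1) * ∏ z ∈ Finset.univ.erase x, (3:ℝ) := by
          rw [← Finset.mul_prod_erase _ _ (Finset.mem_univ x), if_pos rfl]
          congr 1
          exact Finset.prod_congr rfl fun z hz => if_neg (Finset.ne_of_mem_erase hz)
      _ ≤ ((N:ℝ)+1) * 3 ^ (Fintype.card S) := by
          rw [Finset.prod_const]
          apply mul_le_mul_of_nonneg_left ?_ (by positivity)
          apply pow_le_pow_right₀ (by norm_num)
          exact le_trans (Finset.card_erase_le) (le_of_eq Finset.card_univ)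
  have hcoef : (0:ℝ) ≤ (N:ℝ)^α * (ε*(N:ℝ))^(-(2*α)) :=
    (mul_pos (Real.rpow_pos_of_pos hNR α) (Real.rpow_pos_of_pos hεN _)).le
  have hN1 : ((N:ℝ)+1) ≤ 2*(N:ℝ) := by
    have : (1:ℝ) ≤ (N:ℝ) := by exact_mod_cast hNpos
    linarith
  calc ∑ η ∈ Jtube S α ε N x y, μ N η
      ≤ ∑ η ∈ Jtube S α ε N x y, (N:ℝ)^α * (ε*(N:ℝ))^(-(2*α)) * g (φ η) :=
        Finset.sum_le_sum hpoint
    _ = (N:ℝ)^α * (ε*(N:ℝ))^(-(2*α)) * ∑ η ∈ Jtube S α ε N x y, g (φ η) := by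
        rw [Finset.mul_sum]
    _ ≤ (N:ℝ)^α * (ε*(N:ℝ))^(-(2*α)) * (((N:ℝ)+1) * 3 ^ (Fintype.card S)) :=
        mul_le_mul_of_nonneg_left hsum2 hcoef
    _ = ε^(-(2*α)) * 3 ^ (Fintype.card S) * ((N:ℝ)^α * (N:ℝ)^(-(2*α))) * ((N:ℝ)+1) := by
        rw [Real.mul_rpow hε.le hNR.le]
        ring
    _ ≤ ε^(-(2*α)) * 3 ^ (Fintype.card S) * ((N:ℝ)^α * (N:ℝ)^(-(2*α))) * (2*(N:ℝ)) := by
        apply mul_le_mul_of_nonneg_left hN1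
        have h1 : (0:ℝ) < ε^(-(2*α)) := Real.rpow_pos_of_pos hε _
        have h2 : (0:ℝ) < (N:ℝ)^α := Real.rpow_pos_of_pos hNR _
        have h3 : (0:ℝ) < (N:ℝ)^(-(2*α)) := Real.rpow_pos_of_pos hNR _
        positivity
    _ = 2 * 3 ^ (Fintype.card S) * ε^(-(2*α)) * ((N:ℝ)^α * (N:ℝ)^(-(2*α)) * (N:ℝ)^(1:ℝ)) := by
        rw [Real.rpow_one]
        ring
    _ = 2 * 3 ^ (Fintype.card S) * ε^(-(2*α)) * (N:ℝ)^(-(α-1)) := by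
        rw [← Real.rpow_add hNR, ← Real.rpow_add hNR]
        congr 1
        ring
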